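/- For all vectors z_1,…,z_9 ∈ ℂ^4 the following polynomial identity (a three-term cluster exchange relation) holds: ⟨1567⟩·⟨12*456*789⟩ = ⟨1456⟩·⟨12*567*789⟩ + ⟨1256⟩·⟨1789⟩·⟨4567⟩, where ⟨12*456*789⟩ denotes the chain polynomial with blocks (z_1,z_2), (z_4,z_5,z_6), (z_7,z_8,z_9), and ⟨12*567*789⟩ denotes the chain polynomial with blocks (z_1,z_2), (z_5,z_6,z_7), (z_7,z_8,z_9). -/

import Mathlib

noncomputable section

/-- `⟨u₁ u₂ u₃ u₄⟩ = det[u₁ u₂ u₃ u₄]`: the determinant of the `4 × 4` complex matrix with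
columns `u₁, u₂, u₃, u₄` in the listed order. -/
def det4 (a b c d : Fin 4 → ℂ) : ℂ :=
  Matrix.det (Matrix.of fun i j => ![a, b, c, d] j i)

/-- The chain polynomial `⟨X * Y * U⟩` for blocks `X = (x₁,x₂)`, `Y = (y₁,y₂,y₃)`,
`U = (u₁,u₂,u₃)` of sizes `(2,3,3)`:
`Σ_{w ∈ S₃¹} sign(w)·det[x₁ x₂ y_{w(2)} y_{w(3)}]·det[y_{w(1)} u₁ u₂ u₃]`. -/
def chain233 (x1 x2 y1 y2 y3 u1 u2 u3 : Fin 4 → ℂ) : ℂ :=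
  det4 x1 x2 y2 y3 * det4 y1 u1 u2 u3
    - det4 x1 x2 y1 y3 * det4 y2 u1 u2 u3
    + det4 x1 x2 y1 y2 * det4 y3 u1 u2 u3

lemma det4_eq (a b c d : Fin 4 → ℂ) :
    det4 a b c d =
      a 0*b 1*c 2*d 3
      - a 0*b 1*d 2*c 3
      - a 0*c 1*b 2*d 3
      + a 0*c 1*d 2*b 3
      + a 0*d 1*b 2*c 3
      - a 0*d 1*c 2*b 3
      - b 0*a 1*c 2*d 3
      + b 0*a 1*d 2*c 3
      + b 0*c 1*a 2*d 3
      - b 0*c 1*d 2*a 3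
      - b 0*d 1*a 2*c 3
      + b 0*d 1*c 2*a 3
      + c 0*a 1*b 2*d 3
      - c 0*a 1*d 2*b 3
      - c 0*b 1*a 2*d 3
      + c 0*b 1*d 2*a 3
      + c 0*d 1*a 2*b 3
      - c 0*d 1*b 2*a 3
      - d 0*a 1*b 2*c 3
      + d 0*a 1*c 2*b 3
      + d 0*b 1*a 2*c 3
      - d 0*b 1*c 2*a 3
      - d 0*c 1*a 2*b 3
      + d 0*c 1*b 2*a 3 := by
  simp [det4, Matrix.det_succ_row_zero, Fin.sum_univ_succ, Fin.succAbove]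
  ring

lemma det4_repeat (a b c : Fin 4 → ℂ) : det4 a a b c = 0 := by
  simp only [det4_eq]; ring

lemma pluecker1 (z1 z2 z4 z5 z6 z7 z8 z9 : Fin 4 → ℂ) :
    - det4 z1 z7 z8 z9 * det4 z2 z4 z5 z6 + det4 z2 z7 z8 z9 * det4 z1 z4 z5 z6
    - det4 z4 z7 z8 z9 * det4 z1 z2 z5 z6 + det4 z5 z7 z8 z9 * det4 z1 z2 z4 z6
    - det4 z6 z7 z8 z9 * det4 z1 z2 z4 z5 = 0 := by
  simp only [det4_eq]; ring

lemma pluecker2 (z1 z2 z5 z6 z7 z8 z9 : Fin 4 → ℂ) :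
    - det4 z1 z7 z8 z9 * det4 z2 z5 z6 z7 + det4 z2 z7 z8 z9 * det4 z1 z5 z6 z7
    - det4 z5 z7 z8 z9 * det4 z1 z2 z6 z7 + det4 z6 z7 z8 z9 * det4 z1 z2 z5 z7 = 0 := by
  simp only [det4_eq]; ring

lemma pluecker3 (z1 z2 z4 z5 z6 z7 : Fin 4 → ℂ) :
    det4 z1 z2 z5 z6 * det4 z4 z5 z6 z7 - det4 z1 z4 z5 z6 * det4 z2 z5 z6 z7
    + det4 z1 z5 z6 z7 * det4 z2 z4 z5 z6 = 0 := by
  simp only [det4_eq]; ring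

/-- For all vectors `z₁, …, z₉ ∈ ℂ⁴`, the three-term cluster exchange
relation
`⟨1567⟩·⟨12 * 456 * 789⟩ = ⟨1456⟩·⟨12 * 567 * 789⟩ + ⟨1256⟩·⟨1789⟩·⟨4567⟩`
holds, where `⟨12 * 456 * 789⟩` (resp. `⟨12 * 567 * 789⟩`) is the chain polynomial with
blocks `(z₁,z₂)`, `(z₄,z₅,z₆)`, `(z₇,z₈,z₉)` (resp. `(z₁,z₂)`, `(z₅,z₆,z₇)`,
`(z₇,z₈,z₉)`). -/
theorem exchange_relation_1567 (z1 z2 z3 z4 z5 z6 z7 z8 z9 : Fin 4 → ℂ) :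
    det4 z1 z5 z6 z7 * chain233 z1 z2 z4 z5 z6 z7 z8 z9
    = det4 z1 z4 z5 z6 * chain233 z1 z2 z5 z6 z7 z7 z8 z9
      + det4 z1 z2 z5 z6 * det4 z1 z7 z8 z9 * det4 z4 z5 z6 z7 := by
  simp only [chain233]
  linear_combination (-(det4 z1 z5 z6 z7)) * pluecker1 z1 z2 z4 z5 z6 z7 z8 z9
    + det4 z1 z4 z5 z6 * pluecker2 z1 z2 z5 z6 z7 z8 z9
    - det4 z1 z7 z8 z9 * pluecker3 z1 z2 z4 z5 z6 z7
    - det4 z1 z4 z5 z6 * det4 z1 z2 z5 z6 * det4_repeat z7 z8 z9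

end
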